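/- Let f : ℝ → ℝ be twice continuously differentiable and let x̄ be a fixed point of f (f(x̄) = x̄). If f′(x̄) = 1 and f″(x̄) < 0, then x̄ is asymptotically semistable from the right: there exists δ > 0 such that for every x₀ with x̄ ≤ x₀ < x̄ + δ, the sequence of iterates f^[n](x₀) converges to x̄ as n → ∞. -/
import Mathlib


open Filter

/-- A fixed point with `f'(x̄) = 1` and `f''(x̄) < 0` is asymptotically
semistable from the right. -/
theorem semistable_from_right (f : ℝ → ℝ) (xbar : ℝ)
    (hf : ContDiff ℝ 2 f)
    (hfix : f xbar = xbar)
    (hd1 : deriv f xbar = 1)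
    (hd2 : iteratedDeriv 2 f xbar < 0) :
    ∃ δ > 0, ∀ x0 : ℝ, xbar ≤ x0 → x0 < xbar + δ →
      Tendsto (fun n : ℕ => f^[n] x0) atTop (nhds xbar) := by
  have hcf : Continuous f := hf.continuous
  have hg1 : ContDiff ℝ 1 (deriv f) := by
    have := (contDiff_succ_iff_deriv (n := 1)).mp (by exact_mod_cast hf)
    exact this.2.2
  have hgc : Continuous (deriv f) := hg1.continuous
  have hg'c : Continuous (deriv (deriv f)) := hg1.continuous_deriv le_rfl
  have hd2' : deriv (deriv f) xbar < 0 := by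
    rwa [iteratedDeriv_succ, iteratedDeriv_one] at hd2
  -- find δ
  have hopen : IsOpen {t : ℝ | 0 < deriv f t ∧ deriv (deriv f) t < 0} :=
    (isOpen_lt continuous_const hgc).inter (isOpen_lt hg'c continuous_const)
  have hmem : xbar ∈ {t : ℝ | 0 < deriv f t ∧ deriv (deriv f) t < 0} := by
    constructor
    · rw [hd1]; norm_num
    · exact hd2'
  obtain ⟨ε, hε, hball⟩ := Metric.isOpen_iff.mp hopen xbar hmem
  set δ := ε / 2 with hδdef
  have hδ : 0 < δ := by positivity
  have hsub : Set.Icc xbar (xbar + δ) ⊆ Metric.ball xbar ε := by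
    intro t ht
    rw [Metric.mem_ball, Real.dist_eq, abs_sub_lt_iff]
    constructor
    · linarith [ht.1, ht.2]
    · linarith [ht.1, ht.2]
  have hpos : ∀ t ∈ Set.Icc xbar (xbar + δ), 0 < deriv f t :=
    fun t ht => (hball (hsub ht)).1
  have hneg : ∀ t ∈ Set.Icc xbar (xbar + δ), deriv (deriv f) t < 0 :=
    fun t ht => (hball (hsub ht)).2
  -- f strictly monotone on Icc
  have hmono : StrictMonoOn f (Set.Icc xbar (xbar + δ)) := by
    apply strictMonoOn_of_deriv_pos (convex_Icc _ _) (hcf.continuousOn)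
    intro t ht
    exact hpos t (interior_subset ht)
  -- deriv f strictly anti on Icc
  have hganti : StrictAntiOn (deriv f) (Set.Icc xbar (xbar + δ)) := by
    apply strictAntiOn_of_deriv_neg (convex_Icc _ _) (hgc.continuousOn)
    intro t ht
    exact hneg t (interior_subset ht)
  have hglt : ∀ t ∈ Set.Ioc xbar (xbar + δ), deriv f t < 1 := by
    intro t ht
    rw [← hd1]
    exact hganti (Set.left_mem_Icc.mpr (by linarith)) ⟨le_of_lt ht.1, ht.2⟩ ht.1
  -- f x - x strictly anti
  have hdiff : Differentiable ℝ f := hf.differentiable (by norm_num)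
  have hanti : StrictAntiOn (fun x => f x - x) (Set.Icc xbar (xbar + δ)) := by
    apply strictAntiOn_of_deriv_neg (convex_Icc _ _)
      (Continuous.continuousOn (by fun_prop))
    intro t ht
    rw [interior_Icc] at ht
    have hder : HasDerivAt (fun x => f x - x) (deriv f t - 1) t :=
      (hdiff t).hasDerivAt.sub (hasDerivAt_id' (x := t))
    rw [hder.deriv]
    have := hglt t ⟨ht.1, le_of_lt ht.2⟩
    linarith
  have hlt : ∀ x ∈ Set.Ioc xbar (xbar + δ), f x < x := by
    intro x hx
    have := hanti (Set.left_mem_Icc.mpr (by linarith)) ⟨le_of_lt hx.1, hx.2⟩ hx.1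
    simp only [hfix] at this
    linarith
  have hge : ∀ x ∈ Set.Icc xbar (xbar + δ), xbar ≤ f x := by
    intro x hx
    rcases eq_or_lt_of_le hx.1 with h | h
    · rw [← h, hfix]
    · have := hmono (Set.left_mem_Icc.mpr (by linarith)) hx h
      rw [hfix] at this
      exact le_of_lt this
  refine ⟨δ, hδ, fun x0 hx0l hx0r => ?_⟩
  set x : ℕ → ℝ := fun n => f^[n] x0 with hxdef
  have hxsucc : ∀ n, x (n + 1) = f (x n) := by
    intro n
    simp [hxdef, Function.iterate_succ_apply']
  -- invariance
  have hinv : ∀ n, x n ∈ Set.Ico xbar (xbar + δ) ∧ x (n + 1) ≤ x n := by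
    intro n
    induction n with
    | zero =>
      refine ⟨⟨hx0l, hx0r⟩, ?_⟩
      rw [hxsucc]
      rcases eq_or_lt_of_le hx0l with h | h
      · simp [hxdef, ← h, hfix]
      · exact le_of_lt (hlt x0 ⟨h, le_of_lt hx0r⟩)
    | succ n ih =>
      obtain ⟨⟨h1, h2⟩, h3⟩ := ih
      have hx1 : x (n + 1) ∈ Set.Ico xbar (xbar + δ) := by
        rw [hxsucc]
        constructor
        · exact hge _ ⟨h1, le_of_lt h2⟩
        · rcases eq_or_lt_of_le h1 with h | h
          · rw [← h, hfix]; linarith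
          · exact lt_of_lt_of_le (hlt _ ⟨h, le_of_lt h2⟩) (by linarith)
      refine ⟨hx1, ?_⟩
      rw [hxsucc (n + 1)]
      rcases eq_or_lt_of_le hx1.1 with h | h
      · rw [← h, hfix]
      · exact le_of_lt (hlt _ ⟨h, le_of_lt hx1.2⟩)
  have hantix : Antitone x := antitone_nat_of_succ_le fun n => (hinv n).2
  have hbdd : BddBelow (Set.range x) := ⟨xbar, by rintro _ ⟨n, rfl⟩; exact (hinv n).1.1⟩
  have hlim : Tendsto x atTop (nhds (⨅ n, x n)) := tendsto_atTop_ciInf hantix hbdd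
  set L := ⨅ n, x n with hLdef
  have hL1 : xbar ≤ L := le_ciInf fun n => (hinv n).1.1
  have hL2 : L ≤ x 0 := ciInf_le hbdd 0
  have hx00 : x 0 = x0 := rfl
  have hfL : f L = L := by
    have h1 : Tendsto (fun n => f (x n)) atTop (nhds (f L)) :=
      (hcf.tendsto L).comp hlim
    have h2 : Tendsto (fun n => x (n + 1)) atTop (nhds L) :=
      hlim.comp (tendsto_add_atTop_nat 1)
    have h3 : (fun n => x (n + 1)) = fun n => f (x n) := funext hxsucc
    rw [h3] at h2
    exact tendsto_nhds_unique h1 h2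
  have hLeq : L = xbar := by
    by_contra h
    have hLgt : xbar < L := lt_of_le_of_ne hL1 (Ne.symm h)
    have : L < xbar + δ := lt_of_le_of_lt (hL2.trans_eq hx00) hx0r
    exact absurd hfL (ne_of_lt (hlt L ⟨hLgt, le_of_lt this⟩))
  rw [← hLeq]
  exact hlim
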